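/- Let (M, ∘, e) be an F-manifold with an eventual identity ε and a special family S̃ containing a flat connection ∇̃, and let X*Y := X∘Y∘ε^{-1}. Then the dual family D_ε(S̃) on the dual F-manifold (M, *, ε) contains a flat connection if and only if there is a vector field W̃ such that for all vector fields X, Y, Z: ( ∇̃²_{X,Y}(ε) − ∇̃_X(C_W̃)(Y) ) ∘ Z = ( ∇̃²_{Z,Y}(ε) − ∇̃_Z(C_W̃)(Y) ) ∘ X. Moreover, if this condition holds, the connection ∇^W_X(Y) := ε∘∇̃_X(ε^{-1}∘Y) − ∇̃_{ε^{-1}∘Y}(ε)∘X + W*X*Y with W := W̃∘ε is flat and belongs to D_ε(S̃). -/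

import Mathlib

/-- An algebraic model of the geometric setting of the paper: `R` plays the role
of the ring `C^∞(M)` of smooth functions on a manifold `M`, and `V` plays the
role of the `C^∞(M)`-module of smooth vector fields on `M`, equipped with its
Lie bracket and with the action of vector fields on functions by derivations. -/
structure SmoothSetting (R V : Type*) [CommRing R] [LieRing V] [Module R V] where
  /-- the action `X(f)` of a vector field `X` on a function `f` -/
  deriv : V → R → R
  deriv_add : ∀ (X : V) (f g : R), deriv X (f + g) = deriv X f + deriv X g
  deriv_mul : ∀ (X : V) (f g : R), deriv X (f * g) = deriv X f * g + f * deriv X g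
  add_deriv : ∀ (X Y : V) (f : R), deriv (X + Y) f = deriv X f + deriv Y f
  smul_deriv : ∀ (f : R) (X : V) (g : R), deriv (f • X) g = f * deriv X g
  bracket_deriv : ∀ (X Y : V) (f : R),
    deriv ⁅X, Y⁆ f = deriv X (deriv Y f) - deriv Y (deriv X f)
  bracket_smul : ∀ (X : V) (f : R) (Y : V), ⁅X, f • Y⁆ = f • ⁅X, Y⁆ + deriv X f • Y

/-- `(m, e)` is an F-manifold structure: `m` is a fiber-preserving (i.e.
`C^∞(M)`-bilinear) commutative associative multiplication on vector fields with
unit field `e`, satisfying the Hertling–Manin integrability condition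
`L_{X∘Y}(∘) = X ∘ L_Y(∘) + Y ∘ L_X(∘)`. -/
structure IsFManifold (R : Type*) {V : Type*} [CommRing R] [LieRing V] [Module R V]
    (m : V → V → V) (e : V) : Prop where
  add_left : ∀ X Y Z : V, m (X + Y) Z = m X Z + m Y Z
  smul_left : ∀ (f : R) (X Y : V), m (f • X) Y = f • m X Y
  comm : ∀ X Y : V, m X Y = m Y X
  assoc : ∀ X Y Z : V, m (m X Y) Z = m X (m Y Z)
  unit : ∀ X : V, m e X = X
  hertling_manin : ∀ X Y Z W : V,
    ⁅m X Y, m Z W⁆ - m ⁅m X Y, Z⁆ W - m Z ⁅m X Y, W⁆ =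
      m X (⁅Y, m Z W⁆ - m ⁅Y, Z⁆ W - m Z ⁅Y, W⁆)
        + m Y (⁅X, m Z W⁆ - m ⁅X, Z⁆ W - m Z ⁅X, W⁆)

/-- The dual multiplication `X * Y := X ∘ Y ∘ ε⁻¹` determined by an invertible
vector field `ε` with inverse `εinv`. -/
def dualMul {V : Type*} (m : V → V → V) (εinv : V) : V → V → V :=
  fun X Y => m (m X Y) εinv

/-- `ε` (with inverse `εinv`) is an eventual identity on the F-manifold `(m, e)`:
it is invertible and the dual multiplication `X * Y = X ∘ Y ∘ ε⁻¹` defines an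
F-manifold structure on `M` with unit field `ε`. -/
def IsEventualIdentity (R : Type*) {V : Type*} [CommRing R] [LieRing V] [Module R V]
    (m : V → V → V) (e ε εinv : V) : Prop :=
  m ε εinv = e ∧ IsFManifold R (dualMul m εinv) ε

/-- `nabla` is a (Koszul) connection on the tangent bundle, i.e. on vector fields. -/
structure IsConnection {R V : Type*} [CommRing R] [LieRing V] [Module R V]
    (S : SmoothSetting R V) (nabla : V → V → V) : Prop where
  add_left : ∀ X Y Z : V, nabla (X + Y) Z = nabla X Z + nabla Y Z
  smul_left : ∀ (f : R) (X Y : V), nabla (f • X) Y = f • nabla X Y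
  add_right : ∀ X Y Z : V, nabla X (Y + Z) = nabla X Y + nabla X Z
  leibniz : ∀ (X : V) (f : R) (Y : V), nabla X (f • Y) = S.deriv X f • Y + f • nabla X Y

/-- `nabla` is torsion-free. -/
def IsTorsionFree {V : Type*} [LieRing V] (nabla : V → V → V) : Prop :=
  ∀ X Y, nabla X Y - nabla Y X = ⁅X, Y⁆

/-- The covariant derivative `∇_X(∘)(Y, Z)` of a multiplication `m` with respect
to a connection `nabla`. -/
def covMul {V : Type*} [LieRing V] (nabla m : V → V → V) (X Y Z : V) : V :=
  nabla X (m Y Z) - m (nabla X Y) Z - m Y (nabla X Z)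

/-- `nabla` is compatible with the multiplication `m`: the vector valued tensor
`∇(∘)` is totally symmetric. -/
def IsCompatible {V : Type*} [LieRing V] (nabla m : V → V → V) : Prop :=
  ∀ X Y Z, covMul nabla m X Y Z = covMul nabla m Y X Z ∧
    covMul nabla m X Y Z = covMul nabla m X Z Y

/-- The curvature `R^∇_{X,Y}Z = ∇_X∇_Y Z − ∇_Y∇_X Z − ∇_{[X,Y]}Z`. -/
def curv {V : Type*} [LieRing V] (nabla : V → V → V) (X Y Z : V) : V :=
  nabla X (nabla Y Z) - nabla Y (nabla X Z) - nabla ⁅X, Y⁆ Z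

/-- `nabla` is flat. -/
def IsFlat {V : Type*} [LieRing V] (nabla : V → V → V) : Prop :=
  ∀ X Y Z, curv nabla X Y Z = 0

/-- The curvature condition
`V∘R_{Z,Y}X + Y∘R_{V,Z}X + Z∘R_{Y,V}X = 0` of Lorenzoni–Pedroni. -/
def CurvCircCond {V : Type*} [LieRing V] (m nabla : V → V → V) : Prop :=
  ∀ X Y Z W, m W (curv nabla Z Y X) + m Y (curv nabla W Z X)
    + m Z (curv nabla Y W X) = 0

/-- A special family of connections on the F-manifold `(m, e)`: the family of
all `∇̃^V_X(Y) = ∇̃_X(Y) + V∘X∘Y`, `V` a vector field, where `∇̃` is some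
torsion-free connection compatible with `m`. -/
def IsSpecialFamily {R V : Type*} [CommRing R] [LieRing V] [Module R V]
    (S : SmoothSetting R V) (m : V → V → V) (SF : Set (V → V → V)) : Prop :=
  ∃ nt : V → V → V, IsConnection S nt ∧ IsTorsionFree nt ∧ IsCompatible nt m ∧
    SF = { n | ∃ W : V, n = fun X Y => nt X Y + m (m W X) Y }

/-- The connection `∇^W_X(Y) = ε∘∇̃_X(ε⁻¹∘Y) − ∇̃_{ε⁻¹∘Y}(ε)∘X + W*X*Y` on the
dual F-manifold, where `*` is the dual multiplication. -/
def dualConn {V : Type*} [LieRing V] (m : V → V → V) (ε εinv : V)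
    (nt : V → V → V) (W : V) : V → V → V :=
  fun X Y => m ε (nt X (m εinv Y)) - m (nt (m εinv Y) ε) X
    + dualMul m εinv (dualMul m εinv W X) Y

/-- The dual family `D_ε(S̃)` built from a chosen connection `nt ∈ S̃`. -/
def dualFamily {V : Type*} [LieRing V] (m : V → V → V) (ε εinv : V)
    (nt : V → V → V) : Set (V → V → V) :=
  { n | ∃ W : V, n = dualConn m ε εinv nt W }

/-- The dual family `D_ε(S̃)` of a family of connections `S̃`. -/
def dualFamilyOfSet {V : Type*} [LieRing V] (m : V → V → V) (ε εinv : V)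
    (SF : Set (V → V → V)) : Set (V → V → V) :=
  { n | ∃ nt ∈ SF, ∃ W : V, n = dualConn m ε εinv nt W }

/-- The second structure connection
`∇^F_X(Y) = ε∘∇̃_X(ε⁻¹∘Y) − ∇̃_{ε⁻¹∘Y}(ε)∘X` of `(M, ∘, e, ε, ∇̃)`. -/
def secondConn {V : Type*} [LieRing V] (m : V → V → V) (ε εinv : V)
    (nt : V → V → V) : V → V → V :=
  fun X Y => m ε (nt X (m εinv Y)) - m (nt (m εinv Y) ε) X

/-- The connection
`∇_X(Y) = ε∘∇̃_X(ε⁻¹∘Y) − ∇̃_{ε⁻¹∘Y}(ε)∘X + (1/2)[ε⁻¹,ε]∘X∘Y + U*X*Y`. -/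
def uDualConn {V : Type*} [LieRing V] [Module ℚ V] (m : V → V → V)
    (ε εinv U : V) (nt : V → V → V) : V → V → V :=
  fun X Y => secondConn m ε εinv nt X Y + (2 : ℚ)⁻¹ • m (m ⁅εinv, ε⁆ X) Y
    + dualMul m εinv (dualMul m εinv U X) Y

/-- The `k`-th power `X^k` of a vector field with respect to the multiplication
`m` with unit `e`. -/
def mpow {V : Type*} (m : V → V → V) (e X : V) : ℕ → V
  | 0 => e
  | k + 1 => m X (mpow m e X k)

/-- The Legendre transformation `L_u(S̃) = { u⁻¹∘∇̃_X(u∘Y) : ∇̃ ∈ S̃ }` of a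
family of connections `S̃` by an invertible vector field `u` (with inverse
`uinv`). -/
def legFamily {V : Type*} (m : V → V → V) (uinv u : V)
    (SF : Set (V → V → V)) : Set (V → V → V) :=
  { n | ∃ nt ∈ SF, n = fun X Y => m uinv (nt X (m u Y)) }


namespace S16

variable {A : Type*} [CommRing A]

/-- covariant derivative of the multiplication, `∇_x(∘)(a,b)`. -/
def TT (D : A → A → A) (x a b : A) : A := D x (a * b) - D x a * b - a * D x b

lemma ttExpand (D : A → A → A) (x a b : A) :
    D x (a * b) = TT D x a b + D x a * b + a * D x b := by
  simp only [TT]; ring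

lemma lemI (D : A → A → A) (x b c d : A) :
    TT D x b (c * d) = TT D x c (d * b) + c * TT D x d b - b * TT D x c d := by
  simp only [TT]
  linear_combination congrArg (D x) (show b * (c * d) = c * (d * b) by ring)

section withD

variable (D : A → A → A) (ε u : A)
variable (hDl : ∀ x y z : A, D (x + y) z = D x z + D y z)
variable (hDr : ∀ x y z : A, D x (y + z) = D x y + D x z)
variable (hue : ε * u = 1)
variable (hs1 : ∀ x a b : A, TT D x a b = TT D a x b)
variable (hEI : ∀ z w : A, D ε (z * w * u) - D (z * w * u) ε
    = (D ε z - D z ε) * w * u + z * (D ε w - D w ε) * u)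
variable (hflat : ∀ x y z : A, D x (D y z) - D y (D x z) - D (D x y - D y x) z = 0)

include hDr in
lemma Dsubr (x y z : A) : D x (y - z) = D x y - D x z := by
  have h := hDr x (y - z) z
  rw [sub_add_cancel] at h
  linear_combination -h

include hDl in
lemma Dsubl (x y z : A) : D (x - y) z = D x z - D y z := by
  have h := hDl (x - y) y z
  rw [sub_add_cancel] at h
  linear_combination -h

include hue hs1 hEI in
lemma star (X Y s : A) :
    ε * D Y (u * (X * s)) - ε * D X (u * (Y * s)) + X * D (u * (Y * s)) ε
      - Y * D (u * (X * s)) ε + (D X Y - D Y X) * s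
    = D Y s * X - D X s * Y := by
  have ei1 : D ε (u * (Y * s)) - D (u * (Y * s)) ε
      = (D ε Y - D Y ε) * s * u + Y * (D ε s - D s ε) * u := by
    have c1 : D ε (u * (Y * s)) = D ε (Y * s * u) := congrArg (D ε) (by ring)
    have c2 : D (u * (Y * s)) ε = D (Y * s * u) ε :=
      congrArg (fun t => D t ε) (by ring)
    rw [c1, c2]; exact hEI Y s
  have ei2 : D ε (u * (X * s)) - D (u * (X * s)) ε
      = (D ε X - D X ε) * s * u + X * (D ε s - D s ε) * u := by
    have c1 : D ε (u * (X * s)) = D ε (X * s * u) := congrArg (D ε) (by ring)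
    have c2 : D (u * (X * s)) ε = D (X * s * u) ε :=
      congrArg (fun t => D t ε) (by ring)
    rw [c1, c2]; exact hEI X s
  have cb5 : D Y (ε * (s * u)) = D Y s :=
    congrArg (D Y) (show ε * (s * u) = s by linear_combination s * hue)
  have cb6 : D X (ε * (s * u)) = D X s :=
    congrArg (D X) (show ε * (s * u) = s by linear_combination s * hue)
  have d1 : TT D Y s u = D Y (s * u) - D Y s * u - s * D Y u := rfl
  have d2 : TT D X s u = D X (s * u) - D X s * u - s * D X u := rfl
  have d3 : TT D Y ε (s * u) = D Y (ε * (s * u)) - D Y ε * (s * u) - ε * D Y (s * u) := rfl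
  have d4 : TT D X ε (s * u) = D X (ε * (s * u)) - D X ε * (s * u) - ε * D X (s * u) := rfl
  linear_combination
    ε * ttExpand D Y u (X * s) - ε * ttExpand D X u (Y * s)
    + ttExpand D Y X s - ttExpand D X Y s
    + ε * lemI D Y u X s - ε * lemI D X u Y s
    - ε * hs1 X Y (s * u) + (ε * u - 1) * hs1 X Y s
    + (ε * X) * d1 - (ε * Y) * d2
    - X * ei1 + Y * ei2
    + X * ttExpand D ε u (Y * s) - Y * ttExpand D ε u (X * s)
    + (X * u) * ttExpand D ε Y s - (Y * u) * ttExpand D ε X s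
    + X * lemI D ε u Y s - Y * lemI D ε u X s
    + X * hs1 ε Y (s * u) - Y * hs1 ε X (s * u)
    + X * d3 - Y * d4
    + X * cb5 - Y * cb6
    + (D Y (X * s) - D X (Y * s) - X * D Y s + Y * D X s) * hue

end withD

/-- the conjugated connection `B_X(k) = ∇_X k - ε⁻¹∘X∘(∇_k ε - W̃∘k)`. -/
def BB (D : A → A → A) (u ε Wt X k : A) : A :=
  D X k - u * (X * (D k ε - Wt * k))

/-- the dual connection `∇^W` with `W = W̃∘ε`, in ring notation. -/
def ND (D : A → A → A) (u ε W X Y : A) : A :=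
  ε * D X (u * Y) - D (u * Y) ε * X + ((W * X) * u * Y) * u

section withD2

variable (D : A → A → A) (ε u : A)
variable (hDl : ∀ x y z : A, D (x + y) z = D x z + D y z)
variable (hDr : ∀ x y z : A, D x (y + z) = D x y + D x z)
variable (hue : ε * u = 1)
variable (hs1 : ∀ x a b : A, TT D x a b = TT D a x b)
variable (hEI : ∀ z w : A, D ε (z * w * u) - D (z * w * u) ε
    = (D ε z - D z ε) * w * u + z * (D ε w - D w ε) * u)
variable (hflat : ∀ x y z : A, D x (D y z) - D y (D x z) - D (D x y - D y x) z = 0)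

include hDl hDr hue hs1 hEI hflat in
lemma M3core (Wt X Y k : A) :
    ε * (BB D u ε Wt X (BB D u ε Wt Y k) - BB D u ε Wt Y (BB D u ε Wt X k)
        - BB D u ε Wt (D X Y - D Y X) k)
    = (D Y (D k ε) - D (D Y k) ε - (D Y (Wt * k) - Wt * D Y k)) * X
      - (D X (D k ε) - D (D X k) ε - (D X (Wt * k) - Wt * D X k)) * Y := by
  simp only [BB]
  set s := D k ε - Wt * k with hs
  have e1 : D X (D Y k - u * (Y * s)) = D X (D Y k) - D X (u * (Y * s)) :=
    Dsubr D hDr _ _ _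
  have e2 : D (D Y k - u * (Y * s)) ε = D (D Y k) ε - D (u * (Y * s)) ε :=
    Dsubl D hDl _ _ _
  have e3 : D Y (D X k - u * (X * s)) = D Y (D X k) - D Y (u * (X * s)) :=
    Dsubr D hDr _ _ _
  have e4 : D (D X k - u * (X * s)) ε = D (D X k) ε - D (u * (X * s)) ε :=
    Dsubl D hDl _ _ _
  have hx : D X s = D X (D k ε) - D X (Wt * k) := by
    rw [hs]; exact Dsubr D hDr _ _ _
  have hy : D Y s = D Y (D k ε) - D Y (Wt * k) := by
    rw [hs]; exact Dsubr D hDr _ _ _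
  rw [e1, e2, e3, e4]
  linear_combination ε * hflat X Y k + star D ε u hue hs1 hEI X Y s
    + X * hy - Y * hx
    + (- X * D (D Y k) ε + Y * D (D X k) ε + X * D (u * (Y * s)) ε
        - Y * D (u * (X * s)) ε + X * Wt * D Y k - Y * Wt * D X k
        + (D X Y - D Y X) * s) * hue

include hDl hDr hue hs1 hEI hflat in
lemma coreMaster (Wt X Y Z : A) :
    ND D u ε (Wt * ε) X (ND D u ε (Wt * ε) Y Z)
      - ND D u ε (Wt * ε) Y (ND D u ε (Wt * ε) X Z)
      - ND D u ε (Wt * ε) (D X Y - D Y X) Z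
    = (D Y (D (u * Z) ε) - D (D Y (u * Z)) ε
        - (D Y (Wt * (u * Z)) - Wt * D Y (u * Z))) * X
      - (D X (D (u * Z) ε) - D (D X (u * Z)) ε
        - (D X (Wt * (u * Z)) - Wt * D X (u * Z))) * Y := by
  have key : ∀ a b : A, ND D u ε (Wt * ε) a b = ε * BB D u ε Wt a (u * b) := by
    intro a b
    simp only [ND, BB]
    linear_combination (a * D (u * b) ε) * hue
  have key2 : ∀ a b : A, u * ND D u ε (Wt * ε) a b = BB D u ε Wt a (u * b) := by
    intro a b
    rw [key a b]
    linear_combination (BB D u ε Wt a (u * b)) * hue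
  rw [key X (ND D u ε (Wt * ε) Y Z), key Y (ND D u ε (Wt * ε) X Z),
    key (D X Y - D Y X) Z, key2 Y Z, key2 X Z]
  linear_combination M3core D ε u hDl hDr hue hs1 hEI hflat Wt X Y (u * Z)

end withD2

end S16

/-- **Theorem 8.2.** Let `(M, ∘, e)` be an F-manifold with an
eventual identity `ε` and special family `S̃` containing a flat connection
`∇̃`. Then `D_ε(S̃)` contains a flat connection iff there is a vector field
`W̃` with `(∇̃²_{X,Y}(ε) − ∇̃_X(C_W̃)(Y))∘Z = (∇̃²_{Z,Y}(ε) − ∇̃_Z(C_W̃)(Y))∘X`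
for all `X, Y, Z`; and in that case the connection `∇^W` with `W = W̃∘ε` is
flat and belongs to `D_ε(S̃)`. -/
theorem statement16 {R V : Type*} [CommRing R] [LieRing V] [Module R V]
    (S : SmoothSetting R V) (m : V → V → V) (e ε εinv : V)
    (hF : IsFManifold R m e) (hev : IsEventualIdentity R m e ε εinv)
    (SF : Set (V → V → V)) (hSF : IsSpecialFamily S m SF)
    (nt : V → V → V) (hnt : nt ∈ SF) (hflat : IsFlat nt) :
    ((∃ nd ∈ dualFamily m ε εinv nt, IsFlat nd) ↔
      ∃ Wt : V, ∀ X Y Z : V,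
        m (nt X (nt Y ε) - nt (nt X Y) ε - (nt X (m Wt Y) - m Wt (nt X Y))) Z =
          m (nt Z (nt Y ε) - nt (nt Z Y) ε - (nt Z (m Wt Y) - m Wt (nt Z Y))) X) ∧
      ∀ Wt : V,
        (∀ X Y Z : V,
          m (nt X (nt Y ε) - nt (nt X Y) ε - (nt X (m Wt Y) - m Wt (nt X Y))) Z =
            m (nt Z (nt Y ε) - nt (nt Z Y) ε - (nt Z (m Wt Y) - m Wt (nt Z Y))) X) →
        IsFlat (dualConn m ε εinv nt (m Wt ε)) ∧
          dualConn m ε εinv nt (m Wt ε) ∈ dualFamily m ε εinv nt := by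
  obtain ⟨nt₀, hconn, htf₀, hcompat₀, hSFeq⟩ := hSF
  rw [hSFeq] at hnt
  obtain ⟨V₀, hnt₀⟩ := hnt
  letI : CommRing V :=
    { (inferInstance : AddCommGroup V) with
      mul := m
      one := e
      mul_assoc := hF.assoc
      mul_comm := hF.comm
      one_mul := hF.unit
      mul_one := fun a => by show m a e = a; rw [hF.comm]; exact hF.unit a
      left_distrib := fun a b c => by
        show m a (b + c) = m a b + m a c
        rw [hF.comm a (b + c), hF.add_left, hF.comm b a, hF.comm c a]
      right_distrib := fun a b c => hF.add_left a b c
      zero_mul := fun a => by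
        have h := hF.add_left 0 0 a
        rw [zero_add] at h
        show m 0 a = 0
        exact left_eq_add.mp h
      mul_zero := fun a => by
        have h := hF.add_left 0 0 a
        rw [zero_add] at h
        show m a 0 = 0
        rw [hF.comm]
        exact left_eq_add.mp h }
  have hueV : ε * εinv = (1 : V) := hev.1
  have hnt₀' : nt = fun X Y : V => nt₀ X Y + V₀ * X * Y := hnt₀
  have hDl : ∀ x y z : V, nt (x + y) z = nt x z + nt y z := by
    intro x y z
    have h : nt₀ (x + y) z = nt₀ x z + nt₀ y z := hconn.add_left x y z
    rw [hnt₀']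
    show nt₀ (x + y) z + V₀ * (x + y) * z = (nt₀ x z + V₀ * x * z) + (nt₀ y z + V₀ * y * z)
    linear_combination h
  have hDr : ∀ x y z : V, nt x (y + z) = nt x y + nt x z := by
    intro x y z
    have h : nt₀ x (y + z) = nt₀ x y + nt₀ x z := hconn.add_right x y z
    rw [hnt₀']
    show nt₀ x (y + z) + V₀ * x * (y + z) = (nt₀ x y + V₀ * x * y) + (nt₀ x z + V₀ * x * z)
    linear_combination h
  have htfV : ∀ x y : V, nt x y - nt y x = ⁅x, y⁆ := by
    intro x y
    have h : nt₀ x y - nt₀ y x = ⁅x, y⁆ := htf₀ x y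
    rw [hnt₀']
    show (nt₀ x y + V₀ * x * y) - (nt₀ y x + V₀ * y * x) = ⁅x, y⁆
    linear_combination h
  have hbr : ∀ x y : V, ⁅x, y⁆ = nt x y - nt y x := fun x y => (htfV x y).symm
  have hs1V : ∀ x a b : V, S16.TT nt x a b = S16.TT nt a x b := by
    intro x a b
    have h : nt₀ x (a * b) - nt₀ x a * b - a * nt₀ x b
        = nt₀ a (x * b) - nt₀ a x * b - x * nt₀ a b := (hcompat₀ x a b).1
    simp only [S16.TT]
    rw [hnt₀']
    show (nt₀ x (a * b) + V₀ * x * (a * b)) - (nt₀ x a + V₀ * x * a) * b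
          - a * (nt₀ x b + V₀ * x * b)
        = (nt₀ a (x * b) + V₀ * a * (x * b)) - (nt₀ a x + V₀ * a * x) * b
          - x * (nt₀ a b + V₀ * a * b)
    linear_combination h
  have hEIV : ∀ z w : V, nt ε (z * w * εinv) - nt (z * w * εinv) ε
      = (nt ε z - nt z ε) * w * εinv + z * (nt ε w - nt w ε) * εinv := by
    intro z w
    have hdu : ∀ X : V, dualMul m εinv ε X = X := hev.2.unit
    have h := hev.2.hertling_manin ε ε z w
    simp only [hdu] at h
    have h2 : (0 : V) = ⁅ε, dualMul m εinv z w⁆ - dualMul m εinv ⁅ε, z⁆ w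
        - dualMul m εinv z ⁅ε, w⁆ := by linear_combination h
    have h3 : (0 : V) = ⁅ε, z * w * εinv⁆ - ⁅ε, z⁆ * w * εinv - z * ⁅ε, w⁆ * εinv := h2
    rw [hbr ε (z * w * εinv), hbr ε z, hbr ε w] at h3
    linear_combination -h3
  have hflatV : ∀ x y z : V, nt x (nt y z) - nt y (nt x z) - nt (nt x y - nt y x) z = 0 := by
    intro x y z
    have h : nt x (nt y z) - nt y (nt x z) - nt ⁅x, y⁆ z = 0 := hflat x y z
    rw [hbr x y] at h
    exact h
  have vMaster : ∀ Wt X Y Z : V,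
      curv (dualConn m ε εinv nt (m Wt ε)) X Y Z
      = (nt Y (nt (εinv * Z) ε) - nt (nt Y (εinv * Z)) ε
          - (nt Y (Wt * (εinv * Z)) - Wt * nt Y (εinv * Z))) * X
        - (nt X (nt (εinv * Z) ε) - nt (nt X (εinv * Z)) ε
          - (nt X (Wt * (εinv * Z)) - Wt * nt X (εinv * Z))) * Y := by
    intro Wt X Y Z
    have hcv : curv (dualConn m ε εinv nt (m Wt ε)) X Y Z
        = S16.ND nt εinv ε (Wt * ε) X (S16.ND nt εinv ε (Wt * ε) Y Z)
          - S16.ND nt εinv ε (Wt * ε) Y (S16.ND nt εinv ε (Wt * ε) X Z)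
          - S16.ND nt εinv ε (Wt * ε) ⁅X, Y⁆ Z := rfl
    rw [hcv, hbr X Y]
    exact S16.coreMaster nt ε εinv hDl hDr hueV hs1V hEIV hflatV Wt X Y Z
  have part2 : ∀ Wt : V,
      (∀ X Y Z : V,
        m (nt X (nt Y ε) - nt (nt X Y) ε - (nt X (m Wt Y) - m Wt (nt X Y))) Z =
          m (nt Z (nt Y ε) - nt (nt Z Y) ε - (nt Z (m Wt Y) - m Wt (nt Z Y))) X) →
      IsFlat (dualConn m ε εinv nt (m Wt ε)) ∧
        dualConn m ε εinv nt (m Wt ε) ∈ dualFamily m ε εinv nt := by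
    intro Wt hcond
    constructor
    · intro X Y Z
      have h := vMaster Wt X Y Z
      have hc : (nt Y (nt (εinv * Z) ε) - nt (nt Y (εinv * Z)) ε
            - (nt Y (Wt * (εinv * Z)) - Wt * nt Y (εinv * Z))) * X
          = (nt X (nt (εinv * Z) ε) - nt (nt X (εinv * Z)) ε
            - (nt X (Wt * (εinv * Z)) - Wt * nt X (εinv * Z))) * Y :=
        hcond Y (εinv * Z) X
      rw [h]
      linear_combination hc
    · exact ⟨m Wt ε, rfl⟩
  refine ⟨⟨?_, ?_⟩, part2⟩
  · rintro ⟨nd, ⟨W, rfl⟩, hnd⟩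
    refine ⟨m W εinv, fun X Y Z => ?_⟩
    have hW : m (m W εinv) ε = W := by
      show W * εinv * ε = W
      linear_combination W * hueV
    have h := vMaster (m W εinv) X Z (ε * Y)
    rw [hW] at h
    have hy : εinv * (ε * Y) = Y := by linear_combination Y * hueV
    rw [hy] at h
    rw [hnd X Z (ε * Y)] at h
    show (nt X (nt Y ε) - nt (nt X Y) ε
          - (nt X (m W εinv * Y) - m W εinv * nt X Y)) * Z
        = (nt Z (nt Y ε) - nt (nt Z Y) ε
          - (nt Z (m W εinv * Y) - m W εinv * nt Z Y)) * X
    linear_combination h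
  · rintro ⟨Wt, hcond⟩
    exact ⟨dualConn m ε εinv nt (m Wt ε), (part2 Wt hcond).2, (part2 Wt hcond).1⟩
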